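/- Let F be a field of characteristic zero, let d ≥ 2 be an even natural number, and let A : (Fin d → Fin n) → F be a d-hypercubic of dimension n. Then cdet(A) = ddet(A), i.e. (1/n!) Σ_{σ_1,…,σ_d ∈ S_n} (∏_{j=1}^{d} sgn σ_j) (∏_{i=1}^{n} A(σ_1(i),…,σ_d(i))) = Σ_{τ_1,…,τ_{d-1} ∈ S_n} (∏_{j=1}^{d-1} sgn τ_j) (∏_{i=1}^{n} A(i, τ_1(i),…,τ_{d-1}(i))). -/
import Mathlib


open Finset

/-- The combinatorial hyperdeterminant of a `d`-hypercubic of dimension `n`: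
`cdet A = (1/n!) Σ_{σ₁,…,σ_d ∈ S_n} (∏ⱼ sgn σⱼ)(∏ᵢ A(σ₁(i),…,σ_d(i)))`. -/
noncomputable def cdet {F : Type*} [Field F] {n d : ℕ} (A : (Fin d → Fin n) → F) : F :=
  (Nat.factorial n : F)⁻¹ *
    ∑ σ : Fin d → Equiv.Perm (Fin n),
      (∏ j, ((Equiv.Perm.sign (σ j) : ℤ) : F)) * ∏ i, A fun j => σ j i

/-- The modified combinatorial hyperdeterminant of a `d`-hypercubic (`d ≥ 2`):
`ddet A = Σ_{τ₁,…,τ_{d-1} ∈ S_n} (∏ⱼ sgn τⱼ)(∏ᵢ A(i, τ₁(i),…,τ_{d-1}(i)))`. -/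
def ddet {F : Type*} [Field F] {n d : ℕ} (A : (Fin d → Fin n) → F) : F :=
  ∑ τ : Fin (d - 1) → Equiv.Perm (Fin n),
    (∏ j, ((Equiv.Perm.sign (τ j) : ℤ) : F)) *
      ∏ i, A fun j : Fin d =>
        if h : (j : ℕ) = 0 then i
        else τ ⟨(j : ℕ) - 1, by have := j.isLt; omega⟩ i

/-- For an even order `d ≥ 2`, the combinatorial hyperdeterminant coincides with
the modified combinatorial hyperdeterminant: `cdet A = ddet A`. -/
theorem cdet_eq_ddet_of_even {F : Type*} [Field F] [CharZero F] {n d : ℕ}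
    (hd2 : 2 ≤ d) (hd : Even d) (A : (Fin d → Fin n) → F) :
    cdet A = ddet A := by
  obtain ⟨m, rfl⟩ : ∃ m, d = m + 1 := ⟨d - 1, by omega⟩
  have key : ∀ σ₀ : Equiv.Perm (Fin n), ∀ τ : Fin m → Equiv.Perm (Fin n),
      (∏ j, ((Equiv.Perm.sign ((Fin.cons σ₀ (fun j => τ j * σ₀) :
            Fin (m + 1) → Equiv.Perm (Fin n)) j) : ℤ) : F)) *
        ∏ i, A (fun j => (Fin.cons σ₀ (fun j => τ j * σ₀) :
            Fin (m + 1) → Equiv.Perm (Fin n)) j i)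
      = (∏ j, ((Equiv.Perm.sign (τ j) : ℤ) : F)) *
        ∏ i, A (fun j : Fin (m + 1) =>
          if h : (j : ℕ) = 0 then i
          else τ ⟨(j : ℕ) - 1, by have := j.isLt; omega⟩ i) := by
    intro σ₀ τ
    congr 1
    · rw [Fin.prod_univ_succ]
      simp only [Fin.cons_succ, Fin.cons_zero]
      have h2 : ∀ j : Fin m, ((Equiv.Perm.sign (τ j * σ₀) : ℤ) : F)
          = ((Equiv.Perm.sign (τ j) : ℤ) : F) * ((Equiv.Perm.sign σ₀ : ℤ) : F) := by
        intro j; rw [map_mul]; push_cast; ring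
      rw [Finset.prod_congr rfl (fun j _ => h2 j), Finset.prod_mul_distrib,
        Finset.prod_const, Finset.card_univ, Fintype.card_fin]
      have hpow : ((Equiv.Perm.sign σ₀ : ℤ) : F) * ((Equiv.Perm.sign σ₀ : ℤ) : F) ^ m
          = 1 := by
        have : ((Equiv.Perm.sign σ₀ : ℤ) : F) * ((Equiv.Perm.sign σ₀ : ℤ) : F) ^ m
            = ((Equiv.Perm.sign σ₀ : ℤ) : F) ^ (m + 1) := by ring
        rw [this]
        rcases Int.units_eq_one_or (Equiv.Perm.sign σ₀) with h | h <;> rw [h]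
        · norm_num
        · push_cast
          exact hd.neg_one_pow
      calc ((Equiv.Perm.sign σ₀ : ℤ) : F) *
            ((∏ j : Fin m, ((Equiv.Perm.sign (τ j) : ℤ) : F)) *
              ((Equiv.Perm.sign σ₀ : ℤ) : F) ^ m)
          = (((Equiv.Perm.sign σ₀ : ℤ) : F) * ((Equiv.Perm.sign σ₀ : ℤ) : F) ^ m) *
            ∏ j : Fin m, ((Equiv.Perm.sign (τ j) : ℤ) : F) := by ring
        _ = ∏ j : Fin m, ((Equiv.Perm.sign (τ j) : ℤ) : F) := by rw [hpow, one_mul]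
    · rw [← Equiv.prod_comp (σ₀ : Equiv.Perm (Fin n))
        (fun i => A (fun j : Fin (m + 1) =>
          if h : (j : ℕ) = 0 then i
          else τ ⟨(j : ℕ) - 1, by have := j.isLt; omega⟩ i))]
      refine Finset.prod_congr rfl fun i _ => ?_
      congr 1
      funext j
      refine Fin.cases ?_ (fun k => ?_) j
      · simp
      · simp only [Fin.cons_succ, Fin.val_succ]
        rw [dif_neg (by omega)]
        rfl
  rw [cdet, ddet]
  rw [← Equiv.sum_comp (Fin.consEquiv fun _ : Fin (m + 1) => Equiv.Perm (Fin n))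
    (fun σ => (∏ j, ((Equiv.Perm.sign (σ j) : ℤ) : F)) * ∏ i, A fun j => σ j i),
    Fintype.sum_prod_type]
  have inner : ∀ σ₀ : Equiv.Perm (Fin n),
      (∑ τ : Fin m → Equiv.Perm (Fin n),
        (∏ j, ((Equiv.Perm.sign ((Fin.consEquiv fun _ : Fin (m + 1) =>
            Equiv.Perm (Fin n)) (σ₀, τ) j) : ℤ) : F)) *
          ∏ i, A fun j => (Fin.consEquiv fun _ : Fin (m + 1) =>
            Equiv.Perm (Fin n)) (σ₀, τ) j i)
      = ∑ τ : Fin m → Equiv.Perm (Fin n),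
        (∏ j, ((Equiv.Perm.sign (τ j) : ℤ) : F)) *
          ∏ i, A fun j : Fin (m + 1) =>
            if h : (j : ℕ) = 0 then i
            else τ ⟨(j : ℕ) - 1, by have := j.isLt; omega⟩ i := by
    intro σ₀
    rw [← Equiv.sum_comp (Equiv.piCongrRight fun _ : Fin m => Equiv.mulRight σ₀)
      (fun τ => (∏ j, ((Equiv.Perm.sign ((Fin.consEquiv fun _ : Fin (m + 1) =>
          Equiv.Perm (Fin n)) (σ₀, τ) j) : ℤ) : F)) *
        ∏ i, A fun j => (Fin.consEquiv fun _ : Fin (m + 1) =>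
          Equiv.Perm (Fin n)) (σ₀, τ) j i)]
    exact Finset.sum_congr rfl fun τ _ => key σ₀ τ
  rw [Finset.sum_congr rfl fun σ₀ _ => inner σ₀, Finset.sum_const, Finset.card_univ,
    Fintype.card_perm, Fintype.card_fin, nsmul_eq_mul, ← mul_assoc,
    inv_mul_cancel₀ (by exact_mod_cast Nat.factorial_ne_zero n), one_mul]
  rfl
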